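/- For K = ℝ^n_+, e = (1,…,1), and ‖·‖ = ‖·‖_∞, and any linear subspace L ⊆ ℝ^n, ν(L) = max{min_{j=1,…,n} x_j : x ∈ L, ‖x‖_∞ ≤ 1}, where ν(L) = min{‖u−y‖₁ : u ∈ ℝ^n_+, y ∈ L^⊥, ‖u‖₁ = 1}. -/

import Mathlib

/-- For `K = ℝⁿ₊`, `e = (1,…,1)` and `‖·‖ = ‖·‖_∞` (with dual norm `‖·‖₁`):
`ν(L) = max {min_j x_j : x ∈ L, ‖x‖_∞ ≤ 1}`. -/
theorem nu_orthant_eq_max_min {n : ℕ} (hn : 0 < n)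
    (L : Submodule ℝ (EuclideanSpace ℝ (Fin n))) :
    sInf {r | ∃ u y : EuclideanSpace ℝ (Fin n), (∀ i, 0 ≤ u i) ∧ y ∈ Lᗮ ∧
        (∑ i, |u i|) = 1 ∧ r = ∑ i, |u i - y i|} =
      sSup {r | ∃ x ∈ L, (⨆ i, |x i|) ≤ 1 ∧ r = ⨅ j, x j} := by
  have hne : Nonempty (Fin n) := ⟨⟨0, hn⟩⟩
  set A := {r : ℝ | ∃ u y : EuclideanSpace ℝ (Fin n), (∀ i, 0 ≤ u i) ∧ y ∈ Lᗮ ∧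
      (∑ i, |u i|) = 1 ∧ r = ∑ i, |u i - y i|} with hA
  set B := {r : ℝ | ∃ x ∈ L, (⨆ i, |x i|) ≤ 1 ∧ r = ⨅ j, x j} with hB
  -- inner product formula
  have inner_eq : ∀ x y : EuclideanSpace ℝ (Fin n), @inner ℝ _ _ x y = ∑ i, x i * y i := by
    intro x y; simp [PiLp.inner_apply, RCLike.inner_apply, mul_comm]
  -- A is nonempty
  have hAne : ((1:ℝ) ∈ A) := by
    refine ⟨(WithLp.equiv 2 _).symm (fun _ => (n:ℝ)⁻¹), 0,
      fun i => by simp [WithLp.equiv_symm_apply],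
      Lᗮ.zero_mem, ?_, ?_⟩
    · simp [WithLp.equiv_symm_apply, abs_of_nonneg (by positivity : (0:ℝ) ≤ (n:ℝ)⁻¹),
        Finset.sum_const, mul_inv_cancel₀ (by exact_mod_cast hn.ne' : (n:ℝ) ≠ 0)]
    · simp [WithLp.equiv_symm_apply, abs_of_nonneg (by positivity : (0:ℝ) ≤ (n:ℝ)⁻¹),
        Finset.sum_const, mul_inv_cancel₀ (by exact_mod_cast hn.ne' : (n:ℝ) ≠ 0)]
  -- B is nonempty
  have hBne : ((0:ℝ) ∈ B) := by
    refine ⟨0, L.zero_mem, ?_, ?_⟩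
    · simp [ciSup_const]
    · simp [ciInf_const]
  -- B is bounded above by 1
  have hBbdd : ∀ r ∈ B, r ≤ (1:ℝ) := by
    rintro r ⟨x, hxL, hxsup, rfl⟩
    have i0 : Fin n := ⟨0, hn⟩
    calc ⨅ j, x j ≤ x i0 := ciInf_le (Set.finite_range _).bddBelow i0
      _ ≤ |x i0| := le_abs_self _
      _ ≤ ⨆ i, |x i| := le_ciSup (f := fun i => |x i|) (Set.finite_range _).bddAbove i0
      _ ≤ 1 := hxsup
  have hBbddA : BddAbove B := ⟨1, fun r hr => hBbdd r hr⟩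
  -- A is bounded below by elements of B (weak duality)
  have weak : ∀ a ∈ A, ∀ b ∈ B, b ≤ a := by
    rintro a ⟨u, y, hu0, hyL, husum, rfl⟩ b ⟨x, hxL, hxsup, rfl⟩
    have hxabs : ∀ i, |x i| ≤ 1 := fun i =>
      le_trans (le_ciSup (f := fun i => |x i|) (Set.finite_range _).bddAbove i) hxsup
    have hinf_le : ∀ i, (⨅ j, x j) ≤ x i := fun i =>
      ciInf_le (Set.finite_range _).bddBelow i
    have h1 : (⨅ j, x j) = ∑ i, u i * (⨅ j, x j) := by
      rw [← Finset.sum_mul]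
      have : ∑ i, u i = 1 := by
        rw [← husum]; exact Finset.sum_congr rfl fun i _ => (abs_of_nonneg (hu0 i)).symm
      rw [this, one_mul]
    have h2 : ∑ i, u i * (⨅ j, x j) ≤ ∑ i, u i * x i :=
      Finset.sum_le_sum fun i _ => mul_le_mul_of_nonneg_left (hinf_le i) (hu0 i)
    have hinner : ∑ i, y i * x i = 0 := by
      rw [← inner_eq]
      exact Submodule.inner_left_of_mem_orthogonal hxL hyL
    have h3 : ∑ i, u i * x i = ∑ i, (u i - y i) * x i := by
      rw [Finset.sum_congr rfl fun i _ => (sub_mul (u i) (y i) (x i))]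
      rw [Finset.sum_sub_distrib, hinner, sub_zero]
    have h4 : ∑ i, (u i - y i) * x i ≤ ∑ i, |u i - y i| := by
      refine Finset.sum_le_sum fun i _ => ?_
      calc (u i - y i) * x i ≤ |(u i - y i) * x i| := le_abs_self _
        _ = |u i - y i| * |x i| := abs_mul _ _
        _ ≤ |u i - y i| * 1 := mul_le_mul_of_nonneg_left (hxabs i) (abs_nonneg _)
        _ = |u i - y i| := mul_one _
    linarith [h1, h2, h3, h4]
  refine le_antisymm ?_ (le_csInf ⟨1, hAne⟩ fun a ha => csSup_le ⟨0, hBne⟩ fun b hb => weak a ha b hb)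
  -- strong duality: sInf A ≤ sSup B
  by_contra hcon
  push_neg at hcon
  set μ := sSup B with hμ
  set m := sInf A with hm
  have hμ0 : 0 ≤ μ := le_csSup hBbddA hBne
  set ν : ℝ := (μ + m) / 2 with hν
  have hμν : μ < ν := by rw [hν]; linarith
  have hνm : ν < m := by rw [hν]; linarith
  have hνpos : 0 < ν := lt_of_le_of_lt hμ0 hμν
  -- the two convex sets
  set s : Set (EuclideanSpace ℝ (Fin n)) := {z | ∑ i, |z i| < ν} with hsdef
  set t : Set (EuclideanSpace ℝ (Fin n)) := {z | ∃ u y, (∀ i, 0 ≤ u i) ∧ y ∈ Lᗮ ∧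
      (∑ i, |u i|) = 1 ∧ z = u - y} with htdef
  have hs_open : IsOpen s := by
    have hc : Continuous fun z : EuclideanSpace ℝ (Fin n) => ∑ i, |z i| :=
      continuous_finset_sum _ fun i _ => (continuous_abs.comp (EuclideanSpace.proj i).continuous)
    exact isOpen_lt hc continuous_const
  have hs_conv : Convex ℝ s := by
    rintro z hz w hw a b ha hb hab
    simp only [hsdef, Set.mem_setOf_eq] at *
    calc ∑ i, |(a • z + b • w) i| ≤ ∑ i, (a * |z i| + b * |w i|) := by
          refine Finset.sum_le_sum fun i _ => ?_
          calc |(a • z + b • w) i| = |a * z i + b * w i| := by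
                simp [PiLp.add_apply, PiLp.smul_apply, smul_eq_mul]
            _ ≤ |a * z i| + |b * w i| := abs_add_le _ _
            _ = a * |z i| + b * |w i| := by rw [abs_mul, abs_mul, abs_of_nonneg ha, abs_of_nonneg hb]
      _ = a * ∑ i, |z i| + b * ∑ i, |w i| := by rw [Finset.mul_sum, Finset.mul_sum, ← Finset.sum_add_distrib]
      _ < ν := by
          rcases eq_or_lt_of_le ha with h0 | hapos
          · rcases eq_or_lt_of_le hb with h0b | hbpos
            · exfalso; rw [← h0, ← h0b] at hab; norm_num at hab
            · have : a = 0 := h0.symm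
              rw [this] at hab ⊢
              simp only [zero_mul, zero_add] at *
              rw [hab] at *
              nlinarith [hw]
          · rcases eq_or_lt_of_le hb with h0b | hbpos
            · have : b = 0 := h0b.symm
              rw [this] at hab ⊢
              simp only [zero_mul, add_zero] at *
              rw [hab] at *
              nlinarith [hz]
            · nlinarith [hz, hw]
  have ht_conv : Convex ℝ t := by
    rintro z ⟨u1, y1, hu1, hy1, hs1, rfl⟩ w ⟨u2, y2, hu2, hy2, hs2, rfl⟩ a b ha hb hab
    refine ⟨a • u1 + b • u2, a • y1 + b • y2, ?_, ?_, ?_, ?_⟩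
    · intro i
      have : (a • u1 + b • u2) i = a * u1 i + b * u2 i := by
        simp [PiLp.add_apply, PiLp.smul_apply, smul_eq_mul]
      rw [this]; exact add_nonneg (mul_nonneg ha (hu1 i)) (mul_nonneg hb (hu2 i))
    · exact Lᗮ.add_mem (Lᗮ.smul_mem a hy1) (Lᗮ.smul_mem b hy2)
    · have : ∀ i, |(a • u1 + b • u2) i| = a * |u1 i| + b * |u2 i| := by
        intro i
        have h1 : (a • u1 + b • u2) i = a * u1 i + b * u2 i := by
          simp [PiLp.add_apply, PiLp.smul_apply, smul_eq_mul]
        rw [h1, abs_of_nonneg (add_nonneg (mul_nonneg ha (hu1 i)) (mul_nonneg hb (hu2 i))),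
          abs_of_nonneg (hu1 i), abs_of_nonneg (hu2 i)]
      rw [Finset.sum_congr rfl fun i _ => this i, Finset.sum_add_distrib,
        ← Finset.mul_sum, ← Finset.mul_sum, hs1, hs2]
      linarith
    · module
  have hdisj : Disjoint s t := by
    rw [Set.disjoint_left]
    rintro z hzs ⟨u, y, hu0, hyL, husum, rfl⟩
    have : (∑ i, |(u - y) i|) ∈ A := ⟨u, y, hu0, hyL, husum, rfl⟩
    have hge : m ≤ ∑ i, |(u - y) i| := csInf_le ⟨0, by
      rintro r ⟨u', y', _, _, _, rfl⟩; positivity⟩ this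
    simp only [hsdef, Set.mem_setOf_eq] at hzs
    linarith
  obtain ⟨f, u0, hfs, hft⟩ := geometric_hahn_banach_open hs_conv hs_open ht_conv hdisj
  -- the representing vector
  set x : EuclideanSpace ℝ (Fin n) :=
    (WithLp.equiv 2 (Fin n → ℝ)).symm (fun i => f (EuclideanSpace.single i 1)) with hxdef
  have hxi : ∀ i, x i = f (EuclideanSpace.single i 1) := fun i => rfl
  have hrepr : ∀ z : EuclideanSpace ℝ (Fin n), f z = ∑ i, z i * x i := by
    intro z
    have hz : z = ∑ i, z i • EuclideanSpace.single i (1:ℝ) := by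
      ext j
      rw [WithLp.ofLp_sum, Finset.sum_apply]
      simp [EuclideanSpace.single_apply]
    conv_lhs => rw [hz]
    rw [map_sum]
    exact Finset.sum_congr rfl fun i _ => by rw [map_smul, smul_eq_mul, hxi]
  have hu0pos : 0 < u0 := by
    have h0s : (0 : EuclideanSpace ℝ (Fin n)) ∈ s := by
      simp only [hsdef, Set.mem_setOf_eq]
      simpa using hνpos
    have := hfs 0 h0s
    simpa using this
  -- f vanishes on Lᗮ
  have hfy : ∀ y ∈ Lᗮ, f y = 0 := by
    intro y hy
    by_contra hfy0
    set δ : EuclideanSpace ℝ (Fin n) := EuclideanSpace.single ⟨0, hn⟩ 1 with hδ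
    have hδt : ∀ c : ℝ, (δ - c • y) ∈ t := by
      intro c
      refine ⟨δ, c • y, ?_, Lᗮ.smul_mem c hy, ?_, rfl⟩
      · intro i; rw [hδ, EuclideanSpace.single_apply]; split <;> norm_num
      · rw [Finset.sum_congr rfl fun i _ => by
          rw [hδ, EuclideanSpace.single_apply, apply_ite (abs : ℝ → ℝ), abs_one, abs_zero]]
        simp
    have key : ∀ c : ℝ, u0 ≤ f δ - c * f y := by
      intro c
      have := hft _ (hδt c)
      rwa [map_sub, map_smul, smul_eq_mul] at this
    have := key ((f δ - u0 + 1) / f y)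
    rw [div_mul_cancel₀ _ hfy0] at this
    linarith
  -- x ∈ L
  have hxL : x ∈ L := by
    rw [← Submodule.orthogonal_orthogonal L]
    rw [Submodule.mem_orthogonal]
    intro y hy
    rw [inner_eq, ← hrepr]
    exact hfy y hy
  -- every coordinate of x is at least u0
  have hxj : ∀ j, u0 ≤ x j := by
    intro j
    have hjt : (EuclideanSpace.single j (1:ℝ)) ∈ t := by
      refine ⟨EuclideanSpace.single j 1, 0, ?_, Lᗮ.zero_mem, ?_, (sub_zero _).symm⟩
      · intro i; rw [EuclideanSpace.single_apply]; split <;> norm_num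
      · rw [Finset.sum_congr rfl fun i _ => by
          rw [EuclideanSpace.single_apply, apply_ite (abs : ℝ → ℝ), abs_one, abs_zero]]
        simp
    have := hft _ hjt
    rwa [← hxi] at this
  have hxpos : ∀ j, 0 < x j := fun j => lt_of_lt_of_le hu0pos (hxj j)
  -- upper bound on coordinates
  have hxub : ∀ i, ν * x i ≤ u0 := by
    intro i
    by_contra hgt
    push_neg at hgt
    set c : ℝ := u0 / x i with hc
    have hc0 : 0 ≤ c := le_of_lt (div_pos hu0pos (hxpos i))
    have hcν : c < ν := by
      rw [hc, div_lt_iff₀ (hxpos i)]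
      linarith [hgt]
    have hzs : (c • EuclideanSpace.single i (1:ℝ)) ∈ s := by
      simp only [hsdef, Set.mem_setOf_eq]
      have : ∀ j, |(c • EuclideanSpace.single i (1:ℝ)) j| = if j = i then c else 0 := by
        intro j
        rw [PiLp.smul_apply, EuclideanSpace.single_apply, smul_eq_mul]
        split <;> simp [abs_of_nonneg hc0]
      rw [Finset.sum_congr rfl fun j _ => this j]
      simpa using hcν
    have := hfs _ hzs
    rw [map_smul, smul_eq_mul, ← hxi, hc, div_mul_cancel₀ _ (hxpos i).ne'] at this
    exact lt_irrefl _ this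
  -- construct the rescaled point in B
  set x' : EuclideanSpace ℝ (Fin n) := (ν / u0) • x with hx'def
  have hx'i : ∀ i, x' i = (ν / u0) * x i := fun i => by
    rw [hx'def, PiLp.smul_apply, smul_eq_mul]
  have hx'pos : ∀ i, 0 < x' i := fun i => by
    rw [hx'i]; exact mul_pos (div_pos hνpos hu0pos) (hxpos i)
  have hx'le1 : ∀ i, x' i ≤ 1 := by
    intro i
    rw [hx'i, div_mul_eq_mul_div, div_le_one hu0pos]
    exact hxub i
  have hx'ge : ∀ j, ν ≤ x' j := by
    intro j
    rw [hx'i]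
    calc ν = (ν / u0) * u0 := by rw [div_mul_cancel₀ _ hu0pos.ne']
      _ ≤ (ν / u0) * x j := mul_le_mul_of_nonneg_left (hxj j) (le_of_lt (div_pos hνpos hu0pos))
  have hx'B : (⨅ j, x' j) ∈ B := by
    refine ⟨x', L.smul_mem _ hxL, ?_, rfl⟩
    refine ciSup_le fun i => ?_
    rw [abs_of_nonneg (hx'pos i).le]
    exact hx'le1 i
  have h1 : (⨅ j, x' j) ≤ μ := le_csSup hBbddA hx'B
  have h2 : ν ≤ ⨅ j, x' j := le_ciInf hx'ge
  linarith
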